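/- Let S ⊆ ℂ be a connected set with S ∩ ℝ ≠ ∅, and let f, g : S → ℂ be continuous functions such that f(z) ∈ ℂ⁻, g(z) ∈ ℂ⁻ and f(z)·g(z) ∈ ℂ⁻ for every z ∈ S, and such that f(x) is a positive real number for every x ∈ S ∩ ℝ. Then log(f(z)·g(z)) = log(f(z)) + log(g(z)) for every z ∈ S. (Proposition 5.70 of the paper for a fixed value of the parameter t, with the hypothesis of definable connectedness replaced by connectedness.) -/

import Mathlib

/-- **Proposition 5.70** (for a fixed value of the parameter `t`, with definable
connectedness replaced by connectedness): let `S ⊆ ℂ` be connected with `S ∩ ℝ ≠ ∅`,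
and let `f, g` be continuous on `S` with values in the slit plane `ℂ⁻ = ℂ ∖ ℝ_{≤0}`,
such that `f z * g z ∈ ℂ⁻` for every `z ∈ S` and `f x` is a positive real for every
real `x ∈ S`. Then `log (f z * g z) = log (f z) + log (g z)` for every `z ∈ S`
(principal branch of the logarithm). -/
theorem log_mul_eq_add_of_connected (S : Set ℂ) (hS : IsConnected S)
    (hSR : ∃ x ∈ S, x.im = 0)
    (f g : ℂ → ℂ) (hf : ContinuousOn f S) (hg : ContinuousOn g S)
    (hfS : ∀ z ∈ S, f z ∈ Complex.slitPlane)
    (hgS : ∀ z ∈ S, g z ∈ Complex.slitPlane)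
    (hfgS : ∀ z ∈ S, f z * g z ∈ Complex.slitPlane)
    (hfR : ∀ x ∈ S, x.im = 0 → (f x).im = 0 ∧ 0 < (f x).re) :
    ∀ z ∈ S, Complex.log (f z * g z) = Complex.log (f z) + Complex.log (g z) := by
  obtain ⟨x₀, hx₀S, hx₀⟩ := hSR
  set h : ℂ → ℂ := fun z =>
    Complex.log (f z * g z) - Complex.log (f z) - Complex.log (g z) with hh
  have pi_pos := Real.pi_pos
  have key : ∀ z ∈ S, ∃ n : ℤ, h z = n * (2 * Real.pi * Complex.I) := by
    intro z hz
    rw [← Complex.exp_eq_one_iff]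
    have hfz := Complex.slitPlane_ne_zero (hfS z hz)
    have hgz := Complex.slitPlane_ne_zero (hgS z hz)
    have hfgz := Complex.slitPlane_ne_zero (hfgS z hz)
    rw [hh]
    simp only [Complex.exp_sub, Complex.exp_log hfz, Complex.exp_log hgz,
      Complex.exp_log hfgz]
    field_simp
  -- continuity of h on S
  have hlogf : ContinuousOn (fun z => Complex.log (f z)) S :=
    fun z hz => (continuousAt_clog (hfS z hz)).comp_continuousWithinAt (hf z hz)
  have hlogg : ContinuousOn (fun z => Complex.log (g z)) S :=
    fun z hz => (continuousAt_clog (hgS z hz)).comp_continuousWithinAt (hg z hz)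
  have hlogfg : ContinuousOn (fun z => Complex.log (f z * g z)) S := by
    intro z hz
    exact ContinuousAt.comp_continuousWithinAt (f := fun z => f z * g z)
      (continuousAt_clog (hfgS z hz)) ((hf.mul hg) z hz)
  have hhc : ContinuousOn h S := (hlogfg.sub hlogf).sub hlogg
  -- the identity holds at x₀
  have hx₀id : h x₀ = 0 := by
    have hfz := Complex.slitPlane_ne_zero (hfS x₀ hx₀S)
    have hgz := Complex.slitPlane_ne_zero (hgS x₀ hx₀S)
    have hargf : Complex.arg (f x₀) = 0 :=
      Complex.arg_eq_zero_iff.mpr ⟨(hfR x₀ hx₀S hx₀).2.le, (hfR x₀ hx₀S hx₀).1⟩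
    have : Complex.log (f x₀ * g x₀) = Complex.log (f x₀) + Complex.log (g x₀) := by
      rw [Complex.log_mul_eq_add_log_iff hfz hgz, hargf, zero_add]
      exact ⟨Complex.neg_pi_lt_arg _, Complex.arg_le_pi _⟩
    simp [hh, this]
  -- pass to the subtype
  haveI : PreconnectedSpace S := Subtype.preconnectedSpace hS.isPreconnected
  set D : S → ℝ := fun z => (h z.1).im with hD
  have hDc : Continuous D := Complex.continuous_im.comp hhc.restrict
  have hDval : ∀ z : S, ∃ n : ℤ, D z = 2 * Real.pi * n := by
    intro z
    obtain ⟨n, hn⟩ := key z.1 z.2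
    exact ⟨n, by simp [hD, hn]; ring⟩
  set A : Set S := D ⁻¹' {0} with hA
  have hA_open : IsOpen A := by
    have : A = D ⁻¹' Set.Ioo (-Real.pi) Real.pi := by
      ext z
      simp only [hA, Set.mem_preimage, Set.mem_singleton_iff, Set.mem_Ioo]
      constructor
      · rintro h0; rw [h0]; constructor <;> linarith
      · rintro ⟨h1, h2⟩
        obtain ⟨n, hn⟩ := hDval z
        rw [hn] at h1 h2 ⊢
        have hn1 : (-1 : ℝ) < n := by nlinarith
        have hn2 : (n : ℝ) < 1 := by nlinarith
        have : n = 0 := by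
          have h1' : (-1 : ℤ) < n := by exact_mod_cast hn1
          have h2' : n < 1 := by exact_mod_cast hn2
          omega
        simp [this]
    rw [this]
    exact isOpen_Ioo.preimage hDc
  have hA_closed : IsClosed A := isClosed_singleton.preimage hDc
  have hA_univ : A = Set.univ := by
    refine (IsClopen.eq_univ ⟨hA_closed, hA_open⟩ ?_)
    exact ⟨⟨x₀, hx₀S⟩, by simp [hA, hD, hx₀id]⟩
  -- conclude
  intro z hz
  have hzA : (h z).im = 0 := by
    have : (⟨z, hz⟩ : S) ∈ A := hA_univ ▸ Set.mem_univ _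
    simpa [hA, hD] using this
  obtain ⟨n, hn⟩ := key z hz
  have him : (h z).im = 2 * Real.pi * n := by simp [hn]; ring
  have hmul : 2 * Real.pi * (n : ℝ) = 0 := by rw [← him]; exact hzA
  have hn0 : (n : ℝ) = 0 := by
    rcases mul_eq_zero.mp hmul with h' | h'
    · nlinarith
    · exact h'
  have : h z = 0 := by rw [hn]; norm_num; exact_mod_cast hn0
  have := this
  rw [hh] at this
  linear_combination this
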